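/- If φ is a non-constant inner function on 𝔻, then the image φ(𝔻) is dense in 𝔻. -/

import Mathlib

open Complex MeasureTheory Filter Set Metric
open scoped Topology

noncomputable section

/-- The open unit disk in `ℂ`. -/
def unitDisk : Set ℂ := Metric.ball (0 : ℂ) 1

/-- `h` is an inner function on the unit disk: it is holomorphic and bounded on `𝔻`,
and for a.e. `t` the radial limit `lim_{r→1⁻} h(r e^{it})` exists and has modulus `1`. -/
def IsInner (h : ℂ → ℂ) : Prop :=
  DifferentiableOn ℂ h unitDisk ∧
  (∃ C : ℝ, ∀ z ∈ unitDisk, ‖h z‖ ≤ C) ∧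
  ∀ᵐ t : ℝ ∂volume, ∃ L : ℂ, ‖L‖ = 1 ∧
    Filter.Tendsto (fun r : ℝ => h ((r : ℂ) * Complex.exp (t * Complex.I)))
      (nhdsWithin 1 (Set.Iio 1)) (nhds L)

/-- A single Blaschke factor: `z` if `a = 0`, and `(|a|/a)·(a − z)/(1 − conj a · z)` otherwise. -/
def blaschkeFactor (a : ℂ) (z : ℂ) : ℂ :=
  if a = 0 then z
  else (((‖a‖ : ℝ) : ℂ) / a) * ((a - z) / (1 - (starRingEnd ℂ) a * z))

/-- `B` coincides on the unit disk with a finite Blaschke product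
`c · ∏ (|aₙ|/aₙ)(aₙ − z)/(1 − conj aₙ · z)` with `|c| = 1` and all `aₙ ∈ 𝔻`. -/
def IsFiniteBlaschke (B : ℂ → ℂ) : Prop :=
  ∃ (c : ℂ) (N : ℕ) (a : Fin N → ℂ),
    ‖c‖ = 1 ∧ (∀ n, a n ∈ unitDisk) ∧
    ∀ z ∈ unitDisk, B z = c * ∏ n, blaschkeFactor (a n) z

/-- `g` is an outer function on the unit disk. -/
def IsOuter (g : ℂ → ℂ) : Prop :=
  DifferentiableOn ℂ g unitDisk ∧
  ∃ G : ℝ → ℝ, (∀ t, 0 ≤ G t) ∧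
    IntervalIntegrable (fun t => Real.log (G t)) volume 0 (2 * Real.pi) ∧
    ∀ z ∈ unitDisk,
      g z = Complex.exp ((1 / (2 * Real.pi) : ℂ) *
        ∫ t in (0:ℝ)..(2 * Real.pi),
          ((Complex.exp (t * Complex.I) + z) / (Complex.exp (t * Complex.I) - z)) *
            (Real.log (G t) : ℂ))

/-- The Smirnov class `N⁺`: the zero function together with all products of an
inner function and an outer function. -/
def MemSmirnov (f : ℂ → ℂ) : Prop :=
  (∀ z ∈ unitDisk, f z = 0) ∨
  ∃ h g : ℂ → ℂ, IsInner h ∧ IsOuter g ∧ ∀ z ∈ unitDisk, f z = h z * g z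

lemma kernel_eq {ρ : ℝ} {z ζ : ℂ} (hζ : ‖ζ‖ = ρ) (hz : ‖z‖ < ρ)
    (hz0 : z ≠ 0) :
    ζ * ((ζ - z)⁻¹ - (ζ - (ρ:ℂ)^2 / (starRingEnd ℂ) z)⁻¹)
      = (((ρ^2 - (‖z‖)^2) / (‖ζ - z‖)^2 : ℝ) : ℂ) := by
  have hρ0 : 0 < ρ := lt_of_le_of_lt (norm_nonneg z) hz
  have hζ0 : ζ ≠ 0 := by
    intro h; rw [h] at hζ; simp at hζ; exact hρ0.ne hζ
  have hcz : (starRingEnd ℂ) z ≠ 0 := by simpa using hz0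
  have hζz : ζ - z ≠ 0 := by
    intro h
    rw [sub_eq_zero] at h
    rw [h] at hζ
    exact hz.ne hζ
  have hpabs : ‖(ρ:ℂ)^2 / (starRingEnd ℂ) z‖ = ρ^2 / ‖z‖ := by
    rw [norm_div, norm_pow, Complex.norm_conj, Complex.norm_real, Real.norm_eq_abs, abs_of_pos hρ0]
  have hplt : ρ < ‖(ρ:ℂ)^2 / (starRingEnd ℂ) z‖ := by
    rw [hpabs, lt_div_iff₀ (norm_pos_iff.mpr hz0), sq]
    exact mul_lt_mul_of_pos_left hz hρ0
  have hζp : ζ - (ρ:ℂ)^2 / (starRingEnd ℂ) z ≠ 0 := by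
    intro h
    rw [sub_eq_zero] at h
    rw [← h, hζ] at hplt
    exact lt_irrefl _ hplt
  have h1 : ζ * (starRingEnd ℂ) ζ = ((ρ:ℂ))^2 := by
    rw [Complex.mul_conj]; norm_cast; rw [← Complex.sq_norm, hζ]
  have h2 : z * (starRingEnd ℂ) z = ((‖z‖ : ℂ))^2 := by
    rw [Complex.mul_conj]; norm_cast; rw [← Complex.sq_norm]
  have h3 : ((‖ζ - z‖ : ℂ))^2 = (ζ - z) * ((starRingEnd ℂ) ζ - (starRingEnd ℂ) z) := by
    rw [← map_sub, Complex.mul_conj]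
    norm_cast
    exact Complex.sq_norm _
  have hconj : (starRingEnd ℂ) ζ - (starRingEnd ℂ) z ≠ 0 := by
    rw [← map_sub]
    exact (map_ne_zero _).mpr hζz
  have hd2 : ζ * (starRingEnd ℂ) z - (ρ:ℂ)^2 ≠ 0 := by
    have h' := mul_ne_zero hζp hcz
    rwa [sub_mul, div_mul_cancel₀ _ hcz] at h'
  push_cast
  rw [h3]
  rw [inv_sub_inv hζz hζp, mul_div_assoc' ζ _ _,
    div_eq_div_iff (mul_ne_zero hζz hζp) (mul_ne_zero hζz hconj)]
  field_simp
  linear_combination (z * (starRingEnd ℂ) z - (ρ:ℂ)^2) * h1 + ((ρ:ℂ)^2 - ζ * (starRingEnd ℂ) z) * h2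

lemma poisson_rep {f : ℂ → ℂ} (hf : DifferentiableOn ℂ f (ball (0:ℂ) 1))
    {ρ : ℝ} (hρ : ρ < 1) {z : ℂ} (hz : ‖z‖ < ρ) (hz0 : z ≠ 0) :
    f z = (2*Real.pi : ℂ)⁻¹ * ∫ t in (0:ℝ)..(2*Real.pi),
      (((ρ^2 - (‖z‖)^2) / (‖circleMap 0 ρ t - z‖)^2 : ℝ) : ℂ)
        * f (circleMap 0 ρ t) := by
  have hρ0 : 0 < ρ := lt_of_le_of_lt (norm_nonneg z) hz
  have hball : closedBall (0:ℂ) ρ ⊆ ball 0 1 := by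
    intro x hx
    simp only [mem_closedBall, mem_ball] at *
    exact lt_of_le_of_lt hx hρ
  have hcont : ContinuousOn f (closedBall (0:ℂ) ρ) := (hf.mono hball).continuousOn
  have hdiff : ∀ x ∈ ball (0:ℂ) ρ, DifferentiableAt ℂ f x := fun x hx =>
    hf.differentiableAt (isOpen_ball.mem_nhds (hball (ball_subset_closedBall hx)))
  have hzb : z ∈ ball (0:ℂ) ρ := by
    simpa [mem_ball, Complex.dist_eq] using hz
  -- Cauchy integral formula
  have hC : (∮ ζ in C(0, ρ), (ζ - z)⁻¹ • f ζ) = (2 * Real.pi * I : ℂ) • f z :=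
    Complex.circleIntegral_sub_inv_smul_of_differentiable_on_off_countable countable_empty
      hzb hcont (fun x hx => hdiff x hx.1)
  set p : ℂ := (ρ:ℂ)^2 / (starRingEnd ℂ) z with hp_def
  have hcz : (starRingEnd ℂ) z ≠ 0 := by simpa using hz0
  have hpabs : ‖p‖ = ρ^2 / ‖z‖ := by
    rw [hp_def, norm_div, norm_pow, Complex.norm_conj, Complex.norm_real, Real.norm_eq_abs, abs_of_pos hρ0]
  have hplt : ρ < ‖p‖ := by
    rw [hpabs, lt_div_iff₀ (norm_pos_iff.mpr hz0), sq]
    exact mul_lt_mul_of_pos_left hz hρ0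
  have hpne : ∀ x ∈ closedBall (0:ℂ) ρ, x - p ≠ 0 := by
    intro x hx h
    rw [sub_eq_zero] at h
    simp only [mem_closedBall, Complex.dist_eq, sub_zero] at hx
    rw [h] at hx
    exact absurd hx (not_le.mpr hplt)
  -- vanishing integral with pole outside
  have h0 : (∮ ζ in C(0, ρ), (ζ - p)⁻¹ • f ζ) = 0 := by
    apply Complex.circleIntegral_eq_zero_of_differentiable_on_off_countable hρ0.le
      countable_empty
    · exact (((continuousOn_id.sub continuousOn_const).inv₀ hpne).smul hcont)
    · intro x hx
      exact ((differentiableAt_id.sub_const p).inv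
        (hpne x (ball_subset_closedBall hx.1))).smul (hdiff x hx.1)
  have hci1 : CircleIntegrable (fun ζ => (ζ - z)⁻¹ • f ζ) 0 ρ := by
    apply ContinuousOn.circleIntegrable hρ0.le
    apply ContinuousOn.smul (f := fun ζ => (ζ - z)⁻¹) _ (hcont.mono sphere_subset_closedBall)
    apply (continuousOn_id.sub continuousOn_const).inv₀
    intro x hx h
    rw [Pi.sub_apply, sub_eq_zero] at h
    simp only [id_eq] at h
    rw [mem_sphere_iff_norm, sub_zero, h] at hx
    exact hz.ne hx
  have hci2 : CircleIntegrable (fun ζ => (ζ - p)⁻¹ • f ζ) 0 ρ := by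
    apply ContinuousOn.circleIntegrable hρ0.le
    exact ((continuousOn_id.sub continuousOn_const).inv₀
      (fun x hx => hpne x (sphere_subset_closedBall hx))).smul
      (hcont.mono sphere_subset_closedBall)
  have hsub : (∮ ζ in C(0, ρ), ((ζ - z)⁻¹ - (ζ - p)⁻¹) • f ζ) = (2 * Real.pi * I : ℂ) • f z := by
    have : (∮ ζ in C(0, ρ), ((ζ - z)⁻¹ - (ζ - p)⁻¹) • f ζ)
        = (∮ ζ in C(0, ρ), ((ζ - z)⁻¹ • f ζ - (ζ - p)⁻¹ • f ζ)) := by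
      congr 1; funext ζ; rw [sub_smul]
    rw [this, circleIntegral.integral_sub hci1 hci2, hC, h0, sub_zero]
  -- unfold circle integral
  rw [circleIntegral] at hsub
  simp only [deriv_circleMap] at hsub
  have hkernel : ∀ t : ℝ, (circleMap 0 ρ t * I) •
      (((circleMap 0 ρ t - z)⁻¹ - (circleMap 0 ρ t - p)⁻¹) • f (circleMap 0 ρ t))
      = I * ((((ρ^2 - (‖z‖)^2) / (‖circleMap 0 ρ t - z‖)^2 : ℝ) : ℂ)
          * f (circleMap 0 ρ t)) := by
    intro t
    have habs : ‖circleMap 0 ρ t‖ = ρ := by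
      rw [norm_circleMap_zero, _root_.abs_of_pos hρ0]
    have := kernel_eq habs hz hz0
    rw [smul_eq_mul, smul_eq_mul, hp_def]
    rw [← hp_def]
    calc circleMap 0 ρ t * I * (((circleMap 0 ρ t - z)⁻¹ - (circleMap 0 ρ t - p)⁻¹)
            * f (circleMap 0 ρ t))
        = I * ((circleMap 0 ρ t * ((circleMap 0 ρ t - z)⁻¹ - (circleMap 0 ρ t - p)⁻¹))
            * f (circleMap 0 ρ t)) := by ring
      _ = _ := by rw [this]
  simp only [hkernel] at hsub
  rw [intervalIntegral.integral_const_mul] at hsub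
  have hI : (I : ℂ) ≠ 0 := I_ne_zero
  have h2π : (2*Real.pi : ℂ) ≠ 0 := by
    simp [Real.pi_ne_zero]
  field_simp at hsub ⊢
  have hS := mul_left_cancel₀ hI (hsub.trans
    (show (I * 2 * (Real.pi:ℂ)) • f z = I * (2 * Real.pi * f z) by rw [smul_eq_mul]; ring))
  linear_combination -hS

lemma fatou_max {f : ℂ → ℂ} (hf : DifferentiableOn ℂ f (ball (0:ℂ) 1)) {C : ℝ}
    (hb : ∀ w ∈ ball (0:ℂ) 1, ‖f w‖ ≤ C)
    (hae : ∀ᵐ t : ℝ ∂volume, ∃ L : ℂ, ‖L‖ ≤ 1 ∧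
      Tendsto (fun r : ℝ => f ((r:ℂ) * Complex.exp ((t:ℂ) * I))) (𝓝[<] (1:ℝ)) (𝓝 L)) :
    ∀ z ∈ ball (0:ℂ) 1, ‖f z‖ ≤ 1 := by
  have hC0 : (0:ℝ) ≤ C := le_trans (norm_nonneg _) (hb 0 (by simp))
  have key : ∀ z ∈ ball (0:ℂ) 1, z ≠ 0 → ‖f z‖ ≤ 1 := by
    intro z hz1 hz0
    set a := ‖z‖ with ha_def
    have ha0 : 0 ≤ a := norm_nonneg z
    have ha1 : a < 1 := by
      simpa [Complex.dist_eq, ha_def] using (mem_ball.mp hz1)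
    set d : ℝ := (1 - a)/2 with hd_def
    have hd0 : 0 < d := by rw [hd_def]; linarith
    set ρ : ℕ → ℝ := fun n => 1 - (1-a)/((n:ℝ)+2) with hρ_def
    have hρhalf : ∀ n, (1+a)/2 ≤ ρ n := by
      intro n
      have hn2 : (2:ℝ) ≤ (n:ℝ)+2 := by
        have := Nat.cast_nonneg (α := ℝ) n; linarith
      have h1 : (1-a)/((n:ℝ)+2) ≤ (1-a)/2 := by
        apply div_le_div_of_nonneg_left (by linarith) (by norm_num) hn2
      simp only [hρ_def]; linarith
    have hρa : ∀ n, a < ρ n := fun n => lt_of_lt_of_le (by linarith) (hρhalf n)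
    have hρ1 : ∀ n, ρ n < 1 := by
      intro n
      have hn0 : (0:ℝ) < (n:ℝ)+2 := by positivity
      have : 0 < (1-a)/((n:ℝ)+2) := div_pos (by linarith) hn0
      simp only [hρ_def]; linarith
    have hρ0 : ∀ n, 0 < ρ n := fun n => lt_of_le_of_lt ha0 (hρa n)
    have hρlim : Tendsto ρ atTop (𝓝 1) := by
      have h1 : Tendsto (fun n : ℕ => (1-a)/((n:ℝ)+2)) atTop (𝓝 0) := by
        apply Tendsto.div_atTop tendsto_const_nhds
        exact tendsto_atTop_add_const_right atTop 2 tendsto_natCast_atTop_atTop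
      have h2 : Tendsto (fun n : ℕ => 1 - (1-a)/((n:ℝ)+2)) atTop (𝓝 (1 - 0)) :=
        tendsto_const_nhds.sub h1
      simpa using h2
    -- the path
    set e : ℝ → ℝ → ℂ := fun r t => (r:ℂ) * Complex.exp ((t:ℂ) * I) with he_def
    have habs_path : ∀ r t : ℝ, 0 ≤ r → ‖e r t‖ = r := by
      intro r t hr
      rw [he_def]
      simp only [norm_mul, Complex.norm_exp_ofReal_mul_I, Complex.norm_real, Real.norm_eq_abs, mul_one]
      exact abs_of_nonneg hr
    have hdist : ∀ r t : ℝ, (1+a)/2 ≤ r → r ≤ 1 → d ≤ ‖e r t - z‖ := by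
      intro r t hr hr1
      have h1 : ‖e r t‖ - ‖z‖ ≤ ‖e r t - z‖ := by
        exact norm_sub_norm_le _ _
      rw [habs_path r t (by linarith)] at h1
      rw [← ha_def] at h1
      rw [hd_def]; linarith
    have hmem_path : ∀ n t, e (ρ n) t ∈ ball (0:ℂ) 1 := by
      intro n t
      rw [mem_ball, Complex.dist_eq, sub_zero, habs_path _ _ (hρ0 n).le]
      exact hρ1 n
    -- the Poisson kernel
    set P : ℝ → ℝ → ℝ := fun r t => (r^2 - a^2) / (‖e r t - z‖)^2 with hP_def
    have hPpos : ∀ r t : ℝ, (1+a)/2 ≤ r → r ≤ 1 → 0 ≤ P r t := by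
      intro r t hr hr1
      have hra : a < r := lt_of_lt_of_le (by linarith) hr
      apply div_nonneg _ (sq_nonneg _)
      nlinarith
    have hPle : ∀ r t : ℝ, (1+a)/2 ≤ r → r ≤ 1 → P r t ≤ 1/d^2 := by
      intro r t hr hr1
      have hden : d^2 ≤ (‖e r t - z‖)^2 := by
        apply sq_le_sq' _ (hdist r t hr hr1)
        linarith [hd0, (norm_nonneg (e r t - z)), hdist r t hr hr1]
      have hnum : r^2 - a^2 ≤ 1 := by nlinarith
      have hd2 : (0:ℝ) < d^2 := by positivity
      have hnum0 : 0 ≤ r^2 - a^2 := by nlinarith [lt_of_lt_of_le (show a < (1+a)/2 by linarith) hr]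
      rw [hP_def]
      exact div_le_div₀ (by norm_num) hnum hd2 hden
    have hPcont : ∀ r : ℝ, (1+a)/2 ≤ r → r ≤ 1 → Continuous (fun t : ℝ => P r t) := by
      intro r hr hr1
      simp only [hP_def, he_def]
      apply Continuous.div continuous_const
      · exact (continuous_norm.comp ((continuous_const.mul (Complex.continuous_exp.comp
          (Complex.continuous_ofReal.mul continuous_const))).sub continuous_const)).pow 2
      · intro t
        exact pow_ne_zero 2 (ne_of_gt (lt_of_lt_of_le hd0 (hdist r t hr hr1)))
    set F : ℕ → ℝ → ℂ := fun n t => ((P (ρ n) t : ℝ) : ℂ) * f (e (ρ n) t) with hF_def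
    have h2π : (2*Real.pi:ℂ) ≠ 0 := by simp [Real.pi_ne_zero]
    have hrep : ∀ n, (∫ t in (0:ℝ)..(2*Real.pi), F n t) = (2*Real.pi:ℂ) * f z := by
      intro n
      have h := poisson_rep hf (hρ1 n) (show ‖z‖ < ρ n from hρa n) hz0
      simp only [circleMap, Complex.ofReal_zero, zero_add] at h
      rw [← ha_def] at h
      simp only [hF_def, hP_def, he_def]
      rw [h, ← mul_assoc, mul_inv_cancel₀ h2π, one_mul]
    have hrep1 : ∀ n, (∫ t in (0:ℝ)..(2*Real.pi), P (ρ n) t) = 2*Real.pi := by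
      intro n
      have h := poisson_rep (f := fun _ => (1:ℂ)) (differentiableOn_const 1)
        (hρ1 n) (show ‖z‖ < ρ n from hρa n) hz0
      simp only [circleMap, Complex.ofReal_zero, zero_add, mul_one] at h
      rw [← ha_def] at h
      rw [intervalIntegral.integral_ofReal] at h
      have h' : ((∫ t in (0:ℝ)..(2*Real.pi),
          ((ρ n)^2 - a^2) / (‖(ρ n :ℂ) * Complex.exp ((t:ℂ) * I) - z‖)^2 : ℝ) : ℂ)
          = (2*Real.pi:ℂ) := by
        field_simp at h
        linear_combination -h
      simp only [hP_def, he_def]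
      exact_mod_cast h'
    -- limit function
    set Lt : ℝ → ℂ := fun t => limUnder (𝓝[<] (1:ℝ))
      (fun r : ℝ => f ((r:ℂ) * Complex.exp ((t:ℂ) * I))) with hLt_def
    have haeL : ∀ᵐ t : ℝ, ‖Lt t‖ ≤ 1 ∧
        Tendsto (fun r : ℝ => f (e r t)) (𝓝[<] (1:ℝ)) (𝓝 (Lt t)) := by
      filter_upwards [hae] with t ht
      obtain ⟨L, hL1, hLtend⟩ := ht
      have hLeq : Lt t = L := by
        rw [hLt_def]
        exact hLtend.limUnder_eq
      rw [hLeq]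
      exact ⟨hL1, hLtend⟩
    set G : ℝ → ℂ := fun t => ((P 1 t : ℝ) : ℂ) * Lt t with hG_def
    have hρtend : Tendsto ρ atTop (𝓝[<] (1:ℝ)) :=
      tendsto_nhdsWithin_of_tendsto_nhds_of_eventually_within _ hρlim
        (Eventually.of_forall (fun n => hρ1 n))
    have hkconv : ∀ t : ℝ, Tendsto (fun n => P (ρ n) t) atTop (𝓝 (P 1 t)) := by
      intro t
      have hc : ContinuousAt (fun r : ℝ => P r t) 1 := by
        simp only [hP_def, he_def]
        apply ContinuousAt.div
        · exact ((continuous_pow 2).sub continuous_const).continuousAt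
        · exact ((continuous_norm.comp ((Complex.continuous_ofReal.mul
            continuous_const).sub continuous_const)).pow 2).continuousAt
        · exact pow_ne_zero 2 (ne_of_gt (lt_of_lt_of_le hd0 (hdist 1 t (by linarith) le_rfl)))
      exact hc.tendsto.comp hρlim
    have hconv : ∀ᵐ t : ℝ, Tendsto (fun n => F n t) atTop (𝓝 (G t)) := by
      filter_upwards [haeL] with t ht
      have h1 : Tendsto (fun n => f (e (ρ n) t)) atTop (𝓝 (Lt t)) := ht.2.comp hρtend
      have h2 : Tendsto (fun n => ((P (ρ n) t : ℝ):ℂ)) atTop (𝓝 ((P 1 t : ℝ):ℂ)) :=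
        (Complex.continuous_ofReal.tendsto _).comp (hkconv t)
      exact h2.mul h1
    have hFcont : ∀ n, Continuous (F n) := by
      intro n
      have hpath : Continuous (fun t : ℝ => e (ρ n) t) := by
        simp only [he_def]
        exact continuous_const.mul (Complex.continuous_exp.comp
          (Complex.continuous_ofReal.mul continuous_const))
      have hfc : Continuous (fun t : ℝ => f (e (ρ n) t)) :=
        hf.continuousOn.comp_continuous hpath (fun t => hmem_path n t)
      exact (Complex.continuous_ofReal.comp (hPcont (ρ n) (hρhalf n) (hρ1 n).le)).mul hfc
    have hFbound : ∀ n, ∀ᵐ t : ℝ, t ∈ Set.uIoc (0:ℝ) (2*Real.pi) → ‖F n t‖ ≤ C/d^2 := by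
      intro n
      apply Eventually.of_forall
      intro t _
      have heq : ‖F n t‖ = P (ρ n) t * ‖f (e (ρ n) t)‖ := by
        rw [hF_def]
        rw [norm_mul, Complex.norm_real, Real.norm_eq_abs,
          _root_.abs_of_nonneg (hPpos (ρ n) t (hρhalf n) (hρ1 n).le)]
      rw [heq]
      calc P (ρ n) t * ‖f (e (ρ n) t)‖ ≤ (1/d^2) * C :=
            mul_le_mul (hPle (ρ n) t (hρhalf n) (hρ1 n).le) (hb _ (hmem_path n t))
              (norm_nonneg _) (by positivity)
        _ = C/d^2 := by ring
    have hDCT : Tendsto (fun n => ∫ t in (0:ℝ)..(2*Real.pi), F n t) atTop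
        (𝓝 (∫ t in (0:ℝ)..(2*Real.pi), G t)) := by
      apply intervalIntegral.tendsto_integral_filter_of_dominated_convergence
        (fun _ : ℝ => C/d^2)
      · exact Eventually.of_forall (fun n => (hFcont n).aestronglyMeasurable)
      · exact Eventually.of_forall hFbound
      · exact intervalIntegrable_const
      · filter_upwards [hconv] with t ht _
        exact ht
    have hGint_eq : (∫ t in (0:ℝ)..(2*Real.pi), G t) = (2*Real.pi:ℂ) * f z :=
      tendsto_nhds_unique (Tendsto.congr hrep hDCT) tendsto_const_nhds
    -- real DCT for the kernel
    have hPDCT : Tendsto (fun n => ∫ t in (0:ℝ)..(2*Real.pi), P (ρ n) t) atTop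
        (𝓝 (∫ t in (0:ℝ)..(2*Real.pi), P 1 t)) := by
      apply intervalIntegral.tendsto_integral_filter_of_dominated_convergence
        (fun _ : ℝ => 1/d^2)
      · exact Eventually.of_forall (fun n => (hPcont (ρ n) (hρhalf n) (hρ1 n).le).aestronglyMeasurable)
      · apply Eventually.of_forall
        intro n
        apply Eventually.of_forall
        intro t _
        rw [Real.norm_eq_abs, _root_.abs_of_nonneg (hPpos (ρ n) t (hρhalf n) (hρ1 n).le)]
        exact hPle (ρ n) t (hρhalf n) (hρ1 n).le
      · exact intervalIntegrable_const
      · apply Eventually.of_forall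
        intro t _
        exact hkconv t
    have hP1_eq : (∫ t in (0:ℝ)..(2*Real.pi), P 1 t) = 2*Real.pi :=
      tendsto_nhds_unique (Tendsto.congr hrep1 hPDCT) tendsto_const_nhds
    -- integrability and bounds for G
    have hGmeas : AEStronglyMeasurable G (volume.restrict (Set.uIoc (0:ℝ) (2*Real.pi))) :=
      aestronglyMeasurable_of_tendsto_ae atTop
        (fun n => (hFcont n).aestronglyMeasurable) (ae_restrict_of_ae hconv)
    have hGnorm_ae : ∀ᵐ t : ℝ, ‖G t‖ ≤ P 1 t := by
      filter_upwards [haeL] with t ht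
      have heq : ‖G t‖ = P 1 t * ‖Lt t‖ := by
        rw [hG_def, norm_mul, Complex.norm_real, Real.norm_eq_abs,
          _root_.abs_of_nonneg (hPpos 1 t (by linarith) le_rfl)]
      rw [heq]
      calc P 1 t * ‖Lt t‖ ≤ P 1 t * 1 :=
            mul_le_mul_of_nonneg_left ht.1 (hPpos 1 t (by linarith) le_rfl)
        _ = P 1 t := mul_one _
    have hP1int : IntervalIntegrable (fun t => P 1 t) volume 0 (2*Real.pi) :=
      (hPcont 1 (by linarith) le_rfl).intervalIntegrable 0 (2*Real.pi)
    have hGint : IntervalIntegrable G volume 0 (2*Real.pi) := by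
      rw [intervalIntegrable_iff]
      exact Integrable.mono' (intervalIntegrable_iff.mp hP1int) hGmeas
        (ae_restrict_of_ae hGnorm_ae)
    have h2πpos : (0:ℝ) < 2*Real.pi := by positivity
    have hnormint : (∫ t in (0:ℝ)..(2*Real.pi), ‖G t‖) ≤ ∫ t in (0:ℝ)..(2*Real.pi), P 1 t :=
      intervalIntegral.integral_mono_ae h2πpos.le hGint.norm hP1int hGnorm_ae
    -- conclusion
    have h0 : f z = (2*Real.pi:ℂ)⁻¹ * ∫ t in (0:ℝ)..(2*Real.pi), G t := by
      rw [hGint_eq, ← mul_assoc, inv_mul_cancel₀ h2π, one_mul]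
    rw [h0, norm_mul]
    have habsinv : ‖(2*Real.pi:ℂ)⁻¹‖ = (2*Real.pi)⁻¹ := by
      rw [norm_inv]
      norm_cast
      rw [Real.norm_of_nonneg h2πpos.le]
    rw [habsinv]
    have hle : ‖∫ t in (0:ℝ)..(2*Real.pi), G t‖ ≤ 2*Real.pi := by
      calc ‖∫ t in (0:ℝ)..(2*Real.pi), G t‖ ≤ ∫ t in (0:ℝ)..(2*Real.pi), ‖G t‖ :=
            intervalIntegral.norm_integral_le_integral_norm h2πpos.le
        _ ≤ ∫ t in (0:ℝ)..(2*Real.pi), P 1 t := hnormint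
        _ = 2*Real.pi := hP1_eq
    calc (2*Real.pi)⁻¹ * ‖∫ t in (0:ℝ)..(2*Real.pi), G t‖
          ≤ (2*Real.pi)⁻¹ * (2*Real.pi) := by
            exact mul_le_mul_of_nonneg_left hle (by positivity)
      _ = 1 := by field_simp
  intro z hz
  rcases eq_or_ne z 0 with rfl | hz0
  · have hc : ContinuousAt f 0 :=
      (hf.differentiableAt (isOpen_ball.mem_nhds (by simp))).continuousAt
    have hseqr : Tendsto (fun n : ℕ => (((n:ℝ)+2)⁻¹ : ℝ)) atTop (𝓝 0) :=
      tendsto_inv_atTop_zero.comp (tendsto_atTop_add_const_right atTop 2 tendsto_natCast_atTop_atTop)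
    have hseq : Tendsto (fun n : ℕ => ((((n:ℝ)+2)⁻¹ : ℝ) : ℂ)) atTop (𝓝 0) := by
      have h := (Complex.continuous_ofReal.tendsto (0:ℝ)).comp hseqr
      rw [Complex.ofReal_zero] at h
      exact h
    have hmemn : ∀ n : ℕ, ((((n:ℝ)+2)⁻¹ : ℝ) : ℂ) ∈ ball (0:ℂ) 1 := by
      intro n
      have hn2 : (2:ℝ) ≤ (n:ℝ)+2 := by
        have := Nat.cast_nonneg (α := ℝ) n; linarith
      rw [mem_ball, Complex.dist_eq, sub_zero, Complex.norm_real, Real.norm_eq_abs,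
        abs_of_pos (by positivity : (0:ℝ) < ((n:ℝ)+2)⁻¹)]
      rw [inv_lt_one_iff₀]
      right; linarith
    have hnz : ∀ n : ℕ, ((((n:ℝ)+2)⁻¹ : ℝ) : ℂ) ≠ 0 := by
      intro n
      have : (((n:ℝ)+2)⁻¹ : ℝ) ≠ 0 := by positivity
      exact_mod_cast Complex.ofReal_ne_zero.mpr this
    have hfn : ∀ n : ℕ, ‖f ((((n:ℝ)+2)⁻¹ : ℝ) : ℂ)‖ ≤ 1 :=
      fun n => key _ (hmemn n) (hnz n)
    have htt : Tendsto (fun n : ℕ => ‖f ((((n:ℝ)+2)⁻¹ : ℝ) : ℂ)‖) atTop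
        (𝓝 (‖f 0‖)) := by
      have h1 : Tendsto (fun n : ℕ => f ((((n:ℝ)+2)⁻¹ : ℝ) : ℂ)) atTop (𝓝 (f 0)) :=
        hc.tendsto.comp hseq
      exact (continuous_norm.tendsto (f 0)).comp h1
    exact le_of_tendsto htt (Eventually.of_forall hfn)
  · exact key z hz hz0

/-- If `φ` is a non-constant inner function on `𝔻`, then `φ(𝔻)` is dense in `𝔻`. -/
theorem image_dense_of_inner_nonconstant
    (φ : ℂ → ℂ) (hφ : IsInner φ)
    (hφnc : ¬ ∃ c : ℂ, ∀ z ∈ unitDisk, φ z = c) :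
    unitDisk ⊆ closure (φ '' unitDisk) := by
  obtain ⟨hd, ⟨C, hC⟩, hae⟩ := hφ
  intro w hw
  by_contra hcl
  rw [Metric.mem_closure_iff] at hcl
  push_neg at hcl
  obtain ⟨ε, hε0, hεb⟩ := hcl
  have hw1 : ‖w‖ < 1 := by
    simpa [unitDisk, Complex.dist_eq] using hw
  have hφsep : ∀ z ∈ ball (0:ℂ) 1, ε ≤ ‖φ z - w‖ := by
    intro z hz
    have h := hεb (φ z) ⟨z, hz, rfl⟩
    rwa [dist_comm, Complex.dist_eq] at h
  have hφle1 : ∀ z ∈ ball (0:ℂ) 1, ‖φ z‖ ≤ 1 := by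
    apply fatou_max hd hC
    filter_upwards [hae] with t ht
    obtain ⟨L, hL, hten⟩ := ht
    exact ⟨L, hL.le, hten⟩
  set F : ℂ → ℂ := fun z => (1 - (starRingEnd ℂ) w * φ z) / (φ z - w) with hF_def
  have hsep0 : ∀ z ∈ ball (0:ℂ) 1, (0:ℝ) < ‖φ z - w‖ :=
    fun z hz => lt_of_lt_of_le hε0 (hφsep z hz)
  have hden : ∀ z ∈ ball (0:ℂ) 1, φ z - w ≠ 0 := by
    intro z hz h
    have := hsep0 z hz
    rw [h] at this
    simp at this
  have hFd : DifferentiableOn ℂ F (ball (0:ℂ) 1) :=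
    DifferentiableOn.div
      ((differentiableOn_const _).sub ((differentiableOn_const _).mul hd))
      (hd.sub (differentiableOn_const _)) hden
  have hnum_le : ∀ z ∈ ball (0:ℂ) 1,
      ‖1 - (starRingEnd ℂ) w * φ z‖ ≤ 1 + ‖w‖ := by
    intro z hz
    calc ‖1 - (starRingEnd ℂ) w * φ z‖
        ≤ ‖1‖ + ‖(starRingEnd ℂ) w * φ z‖ := norm_sub_le _ _
      _ = 1 + ‖w‖ * ‖φ z‖ := by
          rw [norm_one, norm_mul, Complex.norm_conj]
      _ ≤ 1 + ‖w‖ * 1 := by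
          have := mul_le_mul_of_nonneg_left (hφle1 z hz) (norm_nonneg w)
          linarith
      _ = 1 + ‖w‖ := by ring
  have hFb : ∀ z ∈ ball (0:ℂ) 1, ‖F z‖ ≤ (1 + ‖w‖)/ε := by
    intro z hz
    rw [hF_def, norm_div]
    exact div_le_div₀ (by positivity) (hnum_le z hz) hε0 (hφsep z hz)
  have hFae : ∀ᵐ t : ℝ ∂volume, ∃ L : ℂ, ‖L‖ ≤ 1 ∧
      Tendsto (fun r : ℝ => F ((r:ℂ) * Complex.exp ((t:ℂ) * I))) (𝓝[<] (1:ℝ)) (𝓝 L) := by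
    filter_upwards [hae] with t ht
    obtain ⟨L, hL, hten⟩ := ht
    have hLw : L - w ≠ 0 := by
      intro h
      rw [sub_eq_zero] at h
      rw [← h] at hw1
      rw [hL] at hw1
      exact lt_irrefl _ hw1
    refine ⟨(1 - (starRingEnd ℂ) w * L) / (L - w), ?_, ?_⟩
    · have hLL : (starRingEnd ℂ) L * L = 1 := by
        rw [mul_comm, Complex.mul_conj]
        norm_cast
        rw [← Complex.sq_norm, hL, one_pow]
      have h1 : (1:ℂ) - (starRingEnd ℂ) w * L = (starRingEnd ℂ) (L - w) * L := by
        rw [map_sub]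
        linear_combination -hLL
      have hkey : ‖1 - (starRingEnd ℂ) w * L‖ = ‖L - w‖ := by
        rw [h1, norm_mul, Complex.norm_conj, hL, mul_one]
      rw [norm_div, hkey]
      have : ‖L - w‖ ≠ 0 := by
        simpa [sub_eq_zero] using hLw
      rw [div_self this]
    · have hcont : ContinuousAt (fun u : ℂ => (1 - (starRingEnd ℂ) w * u)/(u - w)) L := by
        apply ContinuousAt.div
        · exact continuousAt_const.sub (continuousAt_const.mul continuousAt_id)
        · exact continuousAt_id.sub continuousAt_const
        · exact hLw
      exact hcont.tendsto.comp hten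
  have hFle1 := fatou_max hFd hFb hFae
  have hφeq1 : ∀ z ∈ ball (0:ℂ) 1, ‖φ z‖ = 1 := by
    intro z hz
    have h1 : ‖1 - (starRingEnd ℂ) w * φ z‖ ≤ ‖φ z - w‖ := by
      have h := hFle1 z hz
      rw [hF_def, norm_div, div_le_one (hsep0 z hz)] at h
      exact h
    have hid : ((Complex.normSq (1 - (starRingEnd ℂ) w * φ z) : ℝ) : ℂ)
        - ((Complex.normSq (φ z - w) : ℝ) : ℂ)
        = (((1 - Complex.normSq w) * (1 - Complex.normSq (φ z)) : ℝ) : ℂ) := by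
      push_cast
      rw [← Complex.mul_conj, ← Complex.mul_conj, ← Complex.mul_conj, ← Complex.mul_conj]
      simp only [map_sub, map_mul, map_one, Complex.conj_conj]
      ring
    have hidR : Complex.normSq (1 - (starRingEnd ℂ) w * φ z) - Complex.normSq (φ z - w)
        = (1 - Complex.normSq w) * (1 - Complex.normSq (φ z)) := by
      exact_mod_cast hid
    have hsq : Complex.normSq (1 - (starRingEnd ℂ) w * φ z) ≤ Complex.normSq (φ z - w) := by
      rw [← Complex.sq_norm, ← Complex.sq_norm]
      exact pow_le_pow_left₀ (norm_nonneg _) h1 2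
    have hw2 : Complex.normSq w < 1 := by
      rw [← Complex.sq_norm]
      nlinarith [norm_nonneg w]
    have hφz1 : Complex.normSq (φ z) ≤ 1 := by
      rw [← Complex.sq_norm]
      nlinarith [hφle1 z hz, norm_nonneg (φ z)]
    have hneg : (1 - Complex.normSq w) * (1 - Complex.normSq (φ z)) ≤ 0 := by
      rw [← hidR]; linarith
    have hφge : 1 ≤ Complex.normSq (φ z) := by nlinarith
    have heq : Complex.normSq (φ z) = 1 := le_antisymm hφz1 hφge
    rw [← Complex.sq_norm] at heq
    nlinarith [norm_nonneg (φ z)]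
  have hmax : IsMaxOn (norm ∘ φ) (ball (0:ℂ) 1) 0 := by
    apply isMaxOn_iff.mpr
    intro z hz
    simp only [Function.comp_apply]
    rw [hφeq1 z hz, hφeq1 0 (by simp)]
  have heqOn := Complex.eqOn_of_isPreconnected_of_isMaxOn_norm
    (convex_ball (0:ℂ) 1).isPreconnected isOpen_ball hd
    (by simp : (0:ℂ) ∈ ball (0:ℂ) 1) hmax
  exact hφnc ⟨φ 0, fun z hz => heqOn hz⟩
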